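/- For a path graph (linear tree) L_n on n vertices, there exists a planar linear arrangement whose cost equals C(n,2); consequently the maximum planar arrangement cost of L_n is C(n,2). -/

import Mathlib

open SimpleGraph

attribute [local instance] Classical.propDecidable

/-- Length of an edge (as an unordered pair) in an arrangement. -/
noncomputable def edgeLen {V : Type*} [Fintype V] (π : V ≃ Fin (Fintype.card V)) :
    Sym2 V → ℕ :=
  Sym2.lift ⟨fun u v => ((π u : ℤ) - (π v : ℤ)).natAbs, fun u v => by
    simp only []; omega⟩

/-- Cost of a linear arrangement: sum of edge lengths. -/
noncomputable def cost {V : Type*} [Fintype V] (G : SimpleGraph V)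
    (π : V ≃ Fin (Fintype.card V)) : ℕ :=
  ∑ᶠ e ∈ G.edgeSet, edgeLen π e

/-- An arrangement is planar if no two edges cross. -/
def Planar {V : Type*} [Fintype V] (G : SimpleGraph V)
    (π : V ≃ Fin (Fintype.card V)) : Prop :=
  ∀ ⦃s t u v : V⦄, G.Adj s t → G.Adj u v → π s < π t → π u < π v → π s < π u →
    ¬(π u < π t ∧ π t < π v)

/-- An arrangement of a tree rooted at `r` is projective if it is planar and no
edge covers the root. -/
def Projective {V : Type*} [Fintype V] (G : SimpleGraph V) (r : V)
    (π : V ≃ Fin (Fintype.card V)) : Prop :=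
  Planar G π ∧ ∀ ⦃u v : V⦄, G.Adj u v → ¬(π u < π r ∧ π r < π v)

noncomputable def maxCost {V : Type*} [Fintype V] (G : SimpleGraph V) : ℕ :=
  sSup {c | ∃ π : V ≃ Fin (Fintype.card V), cost G π = c}

noncomputable def maxPlanar {V : Type*} [Fintype V] (G : SimpleGraph V) : ℕ :=
  sSup {c | ∃ π : V ≃ Fin (Fintype.card V), Planar G π ∧ cost G π = c}

noncomputable def maxProj {V : Type*} [Fintype V] (G : SimpleGraph V) (r : V) : ℕ :=
  sSup {c | ∃ π : V ≃ Fin (Fintype.card V), Projective G r π ∧ cost G π = c}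

/-- `compSize G u v` : the number of vertices of the connected component of `v`
after removing the edge `uv` (this is `n_u(v)`). -/
noncomputable def compSize {V : Type*} [Fintype V] (G : SimpleGraph V) (u v : V) : ℕ :=
  Nat.card {y : V // (G.deleteEdges {s(u, v)}).Reachable v y}

/-- The star graph: the vertex with value `0` (the hub) is adjacent to all others. -/
def starGraph (n : ℕ) : SimpleGraph (Fin n) :=
  SimpleGraph.fromRel (fun i _ => (i : ℕ) = 0)


/- ===== auxiliary machinery ===== -/

lemma gauss_sum_desc (m : ℕ) : ∑ k ∈ Finset.range m, (m - k) = (m+1).choose 2 := by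
  induction m with
  | zero => simp
  | succ m ih =>
    rw [Finset.sum_range_succ]
    have : ∀ k ∈ Finset.range m, m + 1 - k = (m - k) + 1 := by intro k hk; simp at hk; omega
    rw [Finset.sum_congr rfl this, Finset.sum_add_distrib, ih]
    simp [Nat.choose_succ_succ]; omega

set_option maxHeartbeats 1000000 in
/-- Key combinatorial lemma: a non-crossing arrangement of the path has cost
at most `n choose 2`. -/
lemma key_noncross_bound : ∀ (n : ℕ) (p : ℕ → ℕ),
    (∀ k, k < n → p k < n) →
    (∀ k l, k < n → l < n → p k = p l → k = l) →
    (∀ i j, i + 1 < n → j + 1 < n →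
      ¬(min (p i) (p (i+1)) < min (p j) (p (j+1)) ∧
        min (p j) (p (j+1)) < max (p i) (p (i+1)) ∧
        max (p i) (p (i+1)) < max (p j) (p (j+1)))) →
    ∑ k ∈ Finset.range (n - 1), (max (p k) (p (k+1)) - min (p k) (p (k+1))) ≤ n.choose 2 := by
  intro n
  induction n with
  | zero => simp
  | succ m ih =>
    intro p hb hinj hnc
    rcases Nat.eq_zero_or_pos m with rfl | hm
    · simp
    obtain ⟨m', rfl⟩ : ∃ m', m = m' + 1 := ⟨m - 1, by omega⟩
    set q : ℕ → ℕ := fun j => if p (j+1) < p 0 then p (j+1) else p (j+1) - 1 with hq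
    have hqspec : ∀ j, (p (j+1) < p 0 ∧ q j = p (j+1)) ∨ (p 0 ≤ p (j+1) ∧ q j = p (j+1) - 1) := by
      intro j
      by_cases h : p (j+1) < p 0 <;> simp [hq, h] <;> omega
    have hne0 : ∀ j, j + 1 < m' + 2 → p (j+1) ≠ p 0 := by
      intro j hj h
      have := hinj (j+1) 0 (by omega) (by omega) h
      omega
    have hqb : ∀ k, k < m' + 1 → q k < m' + 1 := by
      intro k hk
      have h1 := hb (k+1) (by omega)
      have h2 := hb 0 (by omega)
      have h3 := hne0 k (by omega)
      rcases hqspec k with ⟨h, he⟩ | ⟨h, he⟩ <;> omega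
    have hqinj : ∀ k l, k < m' + 1 → l < m' + 1 → q k = q l → k = l := by
      intro k l hk hl he
      have h1 : p (k+1) = p (l+1) → k = l := by
        intro h; have := hinj (k+1) (l+1) (by omega) (by omega) h; omega
      have h2 := hne0 k (by omega)
      have h3 := hne0 l (by omega)
      rcases hqspec k with ⟨ha, hb'⟩ | ⟨ha, hb'⟩ <;> rcases hqspec l with ⟨hc, hd⟩ | ⟨hc, hd⟩ <;> omega
    have hqnc : ∀ i j, i + 1 < m' + 1 → j + 1 < m' + 1 →
        ¬(min (q i) (q (i+1)) < min (q j) (q (j+1)) ∧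
          min (q j) (q (j+1)) < max (q i) (q (i+1)) ∧
          max (q i) (q (i+1)) < max (q j) (q (j+1))) := by
      intro i j hi hj
      have HA := hqspec i
      have HB := hqspec (i+1)
      have HC := hqspec j
      have HD := hqspec (j+1)
      have h1 := hne0 i (by omega)
      have h2 := hne0 (i+1) (by omega)
      have h3 := hne0 j (by omega)
      have h4 := hne0 (j+1) (by omega)
      have NC := hnc (i+1) (j+1) (by omega) (by omega)
      omega
    have IH := ih q hqb hqinj hqnc
    simp only [show ∀ a:ℕ, a+1+1=a+2 from fun _ => rfl, show (0:ℕ)+1 = 1 from rfl, Nat.add_sub_cancel] at IH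
    have hsplit : ∑ k ∈ Finset.range (m' + 1), (max (p k) (p (k+1)) - min (p k) (p (k+1)))
        = (∑ k ∈ Finset.range m', (max (p (k+1)) (p (k+2)) - min (p (k+1)) (p (k+2))))
          + (max (p 0) (p 1) - min (p 0) (p 1)) := by
      rw [Finset.sum_range_succ']
    have hpoint : ∀ k ∈ Finset.range m',
        (max (p (k+1)) (p (k+2)) - min (p (k+1)) (p (k+2)))
        = (max (q k) (q (k+1)) - min (q k) (q (k+1)))
          + (if min (p (k+1)) (p (k+2)) < p 0 ∧ p 0 < max (p (k+1)) (p (k+2)) then 1 else 0) := by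
      intro k hk
      simp only [Finset.mem_range] at hk
      have HA := hqspec k
      have HB := hqspec (k+1)
      have h1 := hne0 k (by omega)
      have h2 := hne0 (k+1) (by omega)
      simp only [show ∀ a:ℕ, a+1+1=a+2 from fun _ => rfl, show (0:ℕ)+1 = 1 from rfl, Nat.add_sub_cancel] at HB h1 h2
      split <;> omega
    set S := (Finset.range m').filter
      (fun k => min (p (k+1)) (p (k+2)) < p 0 ∧ p 0 < max (p (k+1)) (p (k+2))) with hS
    have hsum2 : ∑ k ∈ Finset.range m', (max (p (k+1)) (p (k+2)) - min (p (k+1)) (p (k+2)))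
        = (∑ k ∈ Finset.range m', (max (q k) (q (k+1)) - min (q k) (q (k+1)))) + S.card := by
      rw [Finset.sum_congr rfl hpoint, Finset.sum_add_distrib]
      congr 1
      rw [Finset.sum_boole]
      simp [hS]
    have hlen0 : max (p 0) (p 1) - min (p 0) (p 1) ≤ m' + 1 := by
      have := hb 0 (by omega); have := hb 1 (by omega); omega
    have hcard : S.card ≤ (Finset.Icc (max (p 0) (p 1) - min (p 0) (p 1) + 1) (m' + 1)).card := by
      apply Finset.card_le_card_of_injOn (fun k => max (p (k+1)) (p (k+2)) - min (p (k+1)) (p (k+2)))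
      · intro k hk
        simp only [hS, Finset.mem_coe, Finset.mem_filter, Finset.mem_range] at hk
        obtain ⟨hk, hc1, hc2⟩ := hk
        simp only [Finset.mem_coe, Finset.mem_Icc]
        have b1 := hb (k+1) (by omega)
        have b2 := hb (k+2) (by omega)
        have b3 := hb 0 (by omega)
        have b4 := hb 1 (by omega)
        have nc1 := hnc 0 (k+1) (by omega) (by omega)
        have nc2 := hnc (k+1) 0 (by omega) (by omega)
        simp only [show ∀ a:ℕ, a+1+1=a+2 from fun _ => rfl, show (0:ℕ)+1 = 1 from rfl, Nat.add_sub_cancel] at nc1 nc2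
        omega
      · intro k hk k' hk' he
        simp only [hS, Finset.coe_filter, Set.mem_setOf_eq, Finset.mem_range] at hk hk'
        obtain ⟨hk, hc1, hc2⟩ := hk
        obtain ⟨hk', hc1', hc2'⟩ := hk'
        simp only at he
        by_contra hne
        have nc1 := hnc (k+1) (k'+1) (by omega) (by omega)
        have nc2 := hnc (k'+1) (k+1) (by omega) (by omega)
        simp only [show ∀ a:ℕ, a+1+1=a+2 from fun _ => rfl, show (0:ℕ)+1 = 1 from rfl, Nat.add_sub_cancel] at nc1 nc2
        have hAC : p (k+1) = p (k'+1) → k = k' := by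
          intro h; have := hinj (k+1) (k'+1) (by omega) (by omega) h; omega
        have hAD : p (k+1) = p (k'+2) → k + 1 = k' + 2 := by
          intro h; have := hinj (k+1) (k'+2) (by omega) (by omega) h; omega
        have hBC : p (k+2) = p (k'+1) → k + 2 = k' + 1 := by
          intro h; have := hinj (k+2) (k'+1) (by omega) (by omega) h; omega
        have hBD : p (k+2) = p (k'+2) → k = k' := by
          intro h; have := hinj (k+2) (k'+2) (by omega) (by omega) h; omega
        clear hnc hinj hb hqspec hne0 hqb hqinj hqnc IH hsplit hpoint hsum2 hq hS hlen0 hm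
        omega
    rw [Nat.card_Icc] at hcard
    have hch : (m' + 2).choose 2 = (m' + 1).choose 2 + (m' + 1) := by
      simp [Nat.choose_succ_succ]; omega
    calc ∑ k ∈ Finset.range (m' + 2 - 1), (max (p k) (p (k+1)) - min (p k) (p (k+1)))
        = (∑ k ∈ Finset.range m', (max (q k) (q (k+1)) - min (q k) (q (k+1)))) + S.card
          + (max (p 0) (p 1) - min (p 0) (p 1)) := by
          rw [show m' + 2 - 1 = m' + 1 from rfl, hsplit, hsum2]
      _ ≤ (m' + 1).choose 2 + (m' + 1) := by
          have : S.card + (max (p 0) (p 1) - min (p 0) (p 1)) ≤ m' + 1 := by omega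
          omega
      _ = (m' + 2).choose 2 := hch.symm

lemma planar_nc {V : Type*} [Fintype V] {G : SimpleGraph V} {π : V ≃ Fin (Fintype.card V)}
    (h : Planar G π) {a b c d : V} (hab : G.Adj a b) (hcd : G.Adj c d) :
    ¬(min (π a).val (π b).val < min (π c).val (π d).val ∧
      min (π c).val (π d).val < max (π a).val (π b).val ∧
      max (π a).val (π b).val < max (π c).val (π d).val) := by
  have h1 : (π a).val ≠ (π b).val := fun he => G.ne_of_adj hab (π.injective (Fin.ext he))
  have h2 : (π c).val ≠ (π d).val := fun he => G.ne_of_adj hcd (π.injective (Fin.ext he))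
  rintro ⟨x1, x2, x3⟩
  rcases Nat.lt_or_ge (π a).val (π b).val with g1 | g1 <;>
    rcases Nat.lt_or_ge (π c).val (π d).val with g2 | g2
  · exact h hab hcd (Fin.lt_def.mpr (by omega)) (Fin.lt_def.mpr (by omega))
      (Fin.lt_def.mpr (by omega)) ⟨Fin.lt_def.mpr (by omega), Fin.lt_def.mpr (by omega)⟩
  · exact h hab hcd.symm (Fin.lt_def.mpr (by omega)) (Fin.lt_def.mpr (by omega))
      (Fin.lt_def.mpr (by omega)) ⟨Fin.lt_def.mpr (by omega), Fin.lt_def.mpr (by omega)⟩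
  · exact h hab.symm hcd (Fin.lt_def.mpr (by omega)) (Fin.lt_def.mpr (by omega))
      (Fin.lt_def.mpr (by omega)) ⟨Fin.lt_def.mpr (by omega), Fin.lt_def.mpr (by omega)⟩
  · exact h hab.symm hcd.symm (Fin.lt_def.mpr (by omega)) (Fin.lt_def.mpr (by omega))
      (Fin.lt_def.mpr (by omega)) ⟨Fin.lt_def.mpr (by omega), Fin.lt_def.mpr (by omega)⟩

lemma pathGraph_edgeFinset (n : ℕ) (hn : 0 < n) :
    (SimpleGraph.pathGraph n).edgeFinset
      = (Finset.range (n-1)).image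
          (fun k => s((⟨k % n, Nat.mod_lt _ hn⟩ : Fin n), (⟨(k+1) % n, Nat.mod_lt _ hn⟩ : Fin n))) := by
  ext e
  induction e with
  | _ a b =>
    simp only [mem_edgeFinset, mem_edgeSet, pathGraph_adj, Finset.mem_image, Finset.mem_range]
    constructor
    · rintro (h | h)
      · refine ⟨a.val, by omega, ?_⟩
        have h1 : (⟨a.val % n, Nat.mod_lt _ hn⟩ : Fin n) = a := Fin.ext (by simp [Nat.mod_eq_of_lt a.isLt])
        have h2 : (⟨(a.val+1) % n, Nat.mod_lt _ hn⟩ : Fin n) = b := Fin.ext (by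
          simp only []; rw [Nat.mod_eq_of_lt (by omega)]; omega)
        rw [h1, h2]
      · refine ⟨b.val, by omega, ?_⟩
        have h1 : (⟨b.val % n, Nat.mod_lt _ hn⟩ : Fin n) = b := Fin.ext (by simp [Nat.mod_eq_of_lt b.isLt])
        have h2 : (⟨(b.val+1) % n, Nat.mod_lt _ hn⟩ : Fin n) = a := Fin.ext (by
          simp only []; rw [Nat.mod_eq_of_lt (by omega)]; omega)
        rw [h1, h2, Sym2.eq_swap]
    · rintro ⟨k, hk, he⟩
      rw [Sym2.eq_iff] at he
      rcases he with ⟨h1, h2⟩ | ⟨h1, h2⟩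
      · left
        rw [← h1, ← h2]
        simp only []
        rw [Nat.mod_eq_of_lt (by omega), Nat.mod_eq_of_lt (by omega)]
      · right
        rw [← h1, ← h2]
        simp only []
        rw [Nat.mod_eq_of_lt (by omega), Nat.mod_eq_of_lt (by omega)]

lemma cost_path (n : ℕ) (hn : 0 < n) (π : Fin n ≃ Fin (Fintype.card (Fin n))) :
    cost (SimpleGraph.pathGraph n) π
      = ∑ k ∈ Finset.range (n-1),
          (max (π ⟨k % n, Nat.mod_lt _ hn⟩).val (π ⟨(k+1) % n, Nat.mod_lt _ hn⟩).val
           - min (π ⟨k % n, Nat.mod_lt _ hn⟩).val (π ⟨(k+1) % n, Nat.mod_lt _ hn⟩).val) := by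
  rw [cost, ← coe_edgeFinset, finsum_mem_coe_finset, pathGraph_edgeFinset n hn,
    Finset.sum_image]
  · apply Finset.sum_congr rfl
    intro k hk
    simp only [edgeLen, Sym2.lift_mk]
    omega
  · intro k hk l hl he
    simp only [Finset.mem_coe, Finset.mem_range] at hk hl
    rw [Sym2.eq_iff] at he
    rcases he with ⟨h1, h2⟩ | ⟨h1, h2⟩ <;>
      [skip; skip] <;>
    · have e1 := congrArg Fin.val h1
      have e2 := congrArg Fin.val h2
      simp only [Nat.mod_eq_of_lt (show k < n by omega), Nat.mod_eq_of_lt (show l < n by omega),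
        Nat.mod_eq_of_lt (show k+1 < n by omega), Nat.mod_eq_of_lt (show l+1 < n by omega)] at e1 e2
      omega

lemma pathGraph_zero_edgeSet : (SimpleGraph.pathGraph 0).edgeSet = ∅ := by
  ext e
  induction e with
  | _ a b => exact a.elim0

lemma path_cost_le (n : ℕ) (π : Fin n ≃ Fin (Fintype.card (Fin n)))
    (h : Planar (SimpleGraph.pathGraph n) π) :
    cost (SimpleGraph.pathGraph n) π ≤ n.choose 2 := by
  rcases Nat.eq_zero_or_pos n with rfl | hn
  · rw [cost, pathGraph_zero_edgeSet, finsum_mem_empty]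
    exact Nat.zero_le _
  set p : ℕ → ℕ := fun k => if hk : k < n then (π ⟨k, hk⟩).val else 0 with hp
  have hpk : ∀ (k : ℕ) (hk : k < n), p k = (π ⟨k, hk⟩).val := by
    intro k hk; simp [hp, hk]
  have hb : ∀ k, k < n → p k < n := by
    intro k hk; rw [hpk k hk]
    have := (π ⟨k, hk⟩).isLt
    simpa using this
  have hinj : ∀ k l, k < n → l < n → p k = p l → k = l := by
    intro k l hk hl he
    rw [hpk k hk, hpk l hl] at he
    simpa using congrArg Fin.val (π.injective (Fin.ext he))
  have hnc : ∀ i j, i + 1 < n → j + 1 < n →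
      ¬(min (p i) (p (i+1)) < min (p j) (p (j+1)) ∧
        min (p j) (p (j+1)) < max (p i) (p (i+1)) ∧
        max (p i) (p (i+1)) < max (p j) (p (j+1))) := by
    intro i j hi hj
    have hadj1 : (SimpleGraph.pathGraph n).Adj ⟨i, by omega⟩ ⟨i+1, by omega⟩ :=
      pathGraph_adj.mpr (Or.inl rfl)
    have hadj2 : (SimpleGraph.pathGraph n).Adj ⟨j, by omega⟩ ⟨j+1, by omega⟩ :=
      pathGraph_adj.mpr (Or.inl rfl)
    have := planar_nc h hadj1 hadj2
    rw [hpk i (by omega), hpk (i+1) (by omega), hpk j (by omega), hpk (j+1) (by omega)]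
    exact this
  have hcost : cost (SimpleGraph.pathGraph n) π
      = ∑ k ∈ Finset.range (n-1), (max (p k) (p (k+1)) - min (p k) (p (k+1))) := by
    rw [cost_path n hn π]
    apply Finset.sum_congr rfl
    intro k hk
    simp only [Finset.mem_range] at hk
    have e1 : (⟨k % n, Nat.mod_lt _ hn⟩ : Fin n) = ⟨k, by omega⟩ :=
      Fin.ext (Nat.mod_eq_of_lt (by omega))
    have e2 : (⟨(k+1) % n, Nat.mod_lt _ hn⟩ : Fin n) = ⟨k+1, by omega⟩ :=
      Fin.ext (Nat.mod_eq_of_lt (by omega))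
    rw [e1, e2, ← hpk k (by omega), ← hpk (k+1) (by omega)]
  rw [hcost]
  exact key_noncross_bound n p hb hinj hnc

/- ===== the zig-zag arrangement ===== -/

def zig (n k : ℕ) : ℕ := if k % 2 = 0 then k / 2 else n - 1 - k / 2

lemma zig_spec (n k : ℕ) :
    (k % 2 = 0 ∧ zig n k = k / 2) ∨ (k % 2 = 1 ∧ zig n k = n - 1 - k / 2) := by
  by_cases h : k % 2 = 0 <;> simp [zig, h] <;> omega

lemma zig_lt (n k : ℕ) (h : k < n) : zig n k < n := by
  have := zig_spec n k; omega

noncomputable def zigEquiv (n : ℕ) : Fin n ≃ Fin (Fintype.card (Fin n)) :=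
  (Equiv.ofBijective (fun k : Fin n => (⟨zig n k.val, zig_lt n k.val k.isLt⟩ : Fin n))
    (Finite.injective_iff_bijective.mp (by
      intro k l h
      have h1 := zig_spec n k.val
      have h2 := zig_spec n l.val
      have h3 := k.isLt
      have h4 := l.isLt
      have h5 : zig n k.val = zig n l.val := congrArg Fin.val h
      exact Fin.ext (by omega)))).trans (finCongr (Fintype.card_fin n).symm)

lemma zigEquiv_val (n : ℕ) (k : Fin n) : ((zigEquiv n) k).val = zig n k.val := rfl

lemma zig_planar (n : ℕ) : Planar (SimpleGraph.pathGraph n) (zigEquiv n) := by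
  intro s t u v hst huv h1 h2 h3
  rintro ⟨h4, h5⟩
  rw [pathGraph_adj] at hst huv
  simp only [Fin.lt_def, zigEquiv_val] at h1 h2 h3 h4 h5
  have Hs := zig_spec n s.val
  have Ht := zig_spec n t.val
  have Hu := zig_spec n u.val
  have Hv := zig_spec n v.val
  have bs := s.isLt
  have bt := t.isLt
  have bu := u.isLt
  have bv := v.isLt
  omega

lemma zig_cost (n : ℕ) (hn : 0 < n) :
    cost (SimpleGraph.pathGraph n) (zigEquiv n) = n.choose 2 := by
  rw [cost_path n hn]
  have hpt : ∀ k ∈ Finset.range (n-1),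
      (max ((zigEquiv n) ⟨k % n, Nat.mod_lt _ hn⟩).val ((zigEquiv n) ⟨(k+1) % n, Nat.mod_lt _ hn⟩).val
        - min ((zigEquiv n) ⟨k % n, Nat.mod_lt _ hn⟩).val ((zigEquiv n) ⟨(k+1) % n, Nat.mod_lt _ hn⟩).val)
      = n - 1 - k := by
    intro k hk
    simp only [Finset.mem_range] at hk
    simp only [zigEquiv_val]
    rw [Nat.mod_eq_of_lt (show k < n by omega), Nat.mod_eq_of_lt (show k+1 < n by omega)]
    have H1 := zig_spec n k
    have H2 := zig_spec n (k+1)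
    omega
  rw [Finset.sum_congr rfl hpt]
  have hg : ∀ k ∈ Finset.range (n-1), n - 1 - k = (n - 1) - k := fun _ _ => rfl
  have := gauss_sum_desc (n-1)
  rwa [Nat.sub_add_cancel hn] at this

/-- The path graph `L_n` has a planar arrangement of cost `n choose 2`, and
consequently its maximum planar arrangement cost is `n choose 2`. -/
theorem path_maxPlanar (n : ℕ) :
    (∃ π : Fin n ≃ Fin (Fintype.card (Fin n)),
        Planar (SimpleGraph.pathGraph n) π ∧
        cost (SimpleGraph.pathGraph n) π = n.choose 2) ∧
    maxPlanar (SimpleGraph.pathGraph n) = n.choose 2 := by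
  have hex : ∃ π : Fin n ≃ Fin (Fintype.card (Fin n)),
      Planar (SimpleGraph.pathGraph n) π ∧
      cost (SimpleGraph.pathGraph n) π = n.choose 2 := by
    rcases Nat.eq_zero_or_pos n with rfl | hn
    · refine ⟨zigEquiv 0, zig_planar 0, ?_⟩
      rw [cost, pathGraph_zero_edgeSet, finsum_mem_empty]
      rfl
    · exact ⟨zigEquiv n, zig_planar n, zig_cost n hn⟩
  refine ⟨hex, ?_⟩
  obtain ⟨π₀, hp₀, hc₀⟩ := hex
  have hmem : n.choose 2 ∈ {c | ∃ π : Fin n ≃ Fin (Fintype.card (Fin n)),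
      Planar (SimpleGraph.pathGraph n) π ∧ cost (SimpleGraph.pathGraph n) π = c} :=
    ⟨π₀, hp₀, hc₀⟩
  have hub : n.choose 2 ∈ upperBounds {c | ∃ π : Fin n ≃ Fin (Fintype.card (Fin n)),
      Planar (SimpleGraph.pathGraph n) π ∧ cost (SimpleGraph.pathGraph n) π = c} := by
    rintro c ⟨π, hp, rfl⟩
    exact path_cost_le n π hp
  rw [maxPlanar]
  exact le_antisymm (csSup_le ⟨_, hmem⟩ hub) (le_csSup ⟨_, hub⟩ hmem)
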